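/- arXiv:2404.16320 — 2 statements merged into one kernel-verified Lean document; each statement's English description precedes it below -/
import Mathlib

section
/- Let Γ: (0,∞) × R^d × R^d → R satisfy the Gaussian bound |Γ(t;x,y)| ≤ K t^{-d/2} exp(-c|x-y|²/t) for all t > 0, x, y ∈ R^d, and suppose Γ is Z^d-periodic in its second argument in the sense that defining Q(t;x,y) = Σ_{k ∈ Z^d} Γ(t; x, y + k) for x, y ∈ [0,1)^d with x - y ∈ [-1/2,1/2]^d, the sum converges absolutely. Then |Q(t;x,y)| ≤ C K (t^{-d/2} + 1) exp(-c|x-y|²/t), with C depending only on c and d. -/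
set_option maxHeartbeats 1000000

section PeriodizationAux


lemma exp_neg_lt_one {u : ℝ} (hu : 0 < u) : Real.exp (-u) < 1 :=
  Real.exp_lt_one_iff.2 (by linarith)

lemma inv_one_sub_exp_le (u : ℝ) (hu : 0 < u) : (1 - Real.exp (-u))⁻¹ ≤ 1 + 1/u := by
  have h1 : Real.exp (-u) ≤ 1/(1+u) := by
    rw [Real.exp_neg, div_eq_inv_mul, mul_one]
    exact inv_anti₀ (by linarith) (by linarith [Real.add_one_le_exp u])
  have h2 : (0:ℝ) < 1 - Real.exp (-u) := by linarith [exp_neg_lt_one hu]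
  rw [inv_le_iff_one_le_mul₀' h2]
  have : (1 + 1/u) * (1 - 1/(1+u)) ≤ (1 + 1/u) * (1 - Real.exp (-u)) := by
    apply mul_le_mul_of_nonneg_left (by linarith) (by positivity)
  have heq : (1 + 1/u) * (1 - 1/(1+u)) = 1 := by
    field_simp
    ring
  linarith

lemma gauss_summable {a : ℝ} (ha : 0 < a) : Summable (fun n : ℕ => Real.exp (-a * (n:ℝ)^2)) := by
  apply Summable.of_nonneg_of_le (fun n => (Real.exp_pos _).le)
    (fun n => ?_) (summable_geometric_of_lt_one (Real.exp_pos (-a)).le (exp_neg_lt_one ha))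
  rw [← Real.exp_nat_mul]
  apply Real.exp_le_exp.2
  have : (n:ℝ) ≤ (n:ℝ)^2 := by
    rcases Nat.eq_zero_or_pos n with h | h
    · simp [h]
    · have : (1:ℝ) ≤ (n:ℝ) := by exact_mod_cast h
      nlinarith
  nlinarith

lemma gauss_nat_bound {a : ℝ} (ha : 0 < a) :
    ∑' n : ℕ, Real.exp (-a * (n:ℝ)^2) ≤ 3 + 2 / Real.sqrt a := by
  have hsa : 0 < Real.sqrt a := Real.sqrt_pos.2 ha
  obtain ⟨N, hNge, hNle⟩ : ∃ N : ℕ, 1 / Real.sqrt a ≤ (N:ℝ) ∧ (N:ℝ) < 1 / Real.sqrt a + 1 :=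
    ⟨⌈1 / Real.sqrt a⌉₊, Nat.le_ceil _, Nat.ceil_lt_add_one (by positivity)⟩
  have hsum := gauss_summable ha
  rw [← Summable.sum_add_tsum_nat_add (N+1) hsum]
  have h1 : ∑ i ∈ Finset.range (N+1), Real.exp (-a * (i:ℝ)^2) ≤ (N:ℝ) + 1 := by
    calc ∑ i ∈ Finset.range (N+1), Real.exp (-a * (i:ℝ)^2)
        ≤ ∑ _i ∈ Finset.range (N+1), (1:ℝ) := by
          apply Finset.sum_le_sum
          intro i _
          apply Real.exp_le_one_iff.2
          nlinarith [sq_nonneg (i:ℝ)]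
      _ = (N:ℝ) + 1 := by simp
  have h2 : ∑' n : ℕ, Real.exp (-a * ((n + (N+1) : ℕ) : ℝ)^2) ≤ 1 + 1/Real.sqrt a := by
    have key : ∀ n : ℕ, Real.exp (-a * ((n + (N+1) : ℕ):ℝ)^2) ≤ Real.exp (-Real.sqrt a) ^ n := by
      intro n
      rw [← Real.exp_nat_mul]
      apply Real.exp_le_exp.2
      push_cast
      have hsq : Real.sqrt a * Real.sqrt a = a := Real.mul_self_sqrt ha.le
      have hb : Real.sqrt a ≤ a * ((N:ℝ)+1) := by
        have h4 : a * (1/Real.sqrt a) ≤ a * ((N:ℝ)+1) :=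
          mul_le_mul_of_nonneg_left (by linarith) ha.le
        rwa [mul_one_div, Real.div_sqrt] at h4
      have hn : (0:ℝ) ≤ n := Nat.cast_nonneg n
      have hN0 : (0:ℝ) ≤ (N:ℝ)+1 := by positivity
      nlinarith [mul_le_mul_of_nonneg_right hb hn, mul_nonneg hn hN0, sq_nonneg ((N:ℝ)+1),
        mul_nonneg ha.le (mul_nonneg hn hN0), mul_nonneg ha.le (sq_nonneg ((N:ℝ)+1)),
        mul_nonneg ha.le (sq_nonneg (n:ℝ))]
    calc ∑' n : ℕ, Real.exp (-a * ((n + (N+1) : ℕ):ℝ)^2)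
        ≤ ∑' n : ℕ, Real.exp (-Real.sqrt a) ^ n :=
          Summable.tsum_le_tsum key ((summable_nat_add_iff (f := fun n : ℕ => Real.exp (-a * (n:ℝ)^2)) (N+1)).2 hsum)
            (summable_geometric_of_lt_one (Real.exp_pos _).le (exp_neg_lt_one hsa))
      _ = (1 - Real.exp (-Real.sqrt a))⁻¹ := tsum_geometric_of_lt_one (Real.exp_pos _).le
            (exp_neg_lt_one hsa)
      _ ≤ 1 + 1/Real.sqrt a := inv_one_sub_exp_le _ hsa
  have h3 : 2 / Real.sqrt a = 1/Real.sqrt a + 1/Real.sqrt a := by ring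
  linarith

noncomputable def hfun (a : ℝ) (m : ℤ) : ℝ := Real.exp (-a * ((m:ℝ)^2 - |(m:ℝ)|))

lemma hfun_nat (a : ℝ) (n : ℕ) : hfun a (n:ℤ) = Real.exp (-a * ((n:ℝ)^2 - (n:ℝ))) := by
  simp [hfun, abs_of_nonneg (Nat.cast_nonneg n : (0:ℝ) ≤ n)]

lemma hfun_neg_nat (a : ℝ) (n : ℕ) : hfun a (-(n:ℤ)) = Real.exp (-a * ((n:ℝ)^2 - (n:ℝ))) := by
  simp [hfun, abs_of_nonneg (Nat.cast_nonneg n : (0:ℝ) ≤ n)]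

lemma hfun_nat_summable {a : ℝ} (ha : 0 < a) :
    Summable (fun n : ℕ => Real.exp (-a * ((n:ℝ)^2 - (n:ℝ)))) := by
  apply Summable.of_nonneg_of_le (fun n => (Real.exp_pos _).le) (fun n => ?_)
    ((summable_geometric_of_lt_one (Real.exp_pos (-a)).le (exp_neg_lt_one ha)).mul_left
      (Real.exp a))
  rw [← Real.exp_nat_mul, ← Real.exp_add]
  apply Real.exp_le_exp.2
  have h : ((n:ℝ) - 1)^2 ≥ 0 := sq_nonneg _
  nlinarith
lemma hfun_summable {a : ℝ} (ha : 0 < a) : Summable (hfun a) := by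
  apply Summable.of_nat_of_neg
  · simpa only [hfun_nat] using hfun_nat_summable ha
  · simpa only [hfun_neg_nat] using hfun_nat_summable ha

lemma hfun_bound {a : ℝ} (ha : 0 < a) : ∑' m : ℤ, hfun a m ≤ 7 + 4 * (1 / Real.sqrt a) := by
  have hs1 : Summable (fun n : ℕ => hfun a (n:ℤ)) := by
    simpa only [hfun_nat] using hfun_nat_summable ha
  have heq2 : (fun n : ℕ => hfun a (-((n:ℤ)+1)))
      = fun n : ℕ => Real.exp (-a * (((n+1:ℕ):ℝ))^2 + -a * (-((n+1:ℕ):ℝ))) := by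
    funext n
    have he : (-((n:ℤ)+1)) = -(((n+1 : ℕ):ℤ)) := by push_cast; ring
    rw [he, hfun_neg_nat]
    ring_nf
  have hs2 : Summable (fun n : ℕ => hfun a (-((n:ℤ)+1))) := by
    rw [heq2]
    have := (summable_nat_add_iff
      (f := fun n : ℕ => Real.exp (-a * ((n:ℝ))^2 + -a * (-(n:ℝ)))) 1).2 ?_
    · exact this
    · have := hfun_nat_summable ha
      apply Summable.congr this
      intro n; ring_nf
  rw [tsum_of_nat_of_neg_add_one hs1 hs2]
  -- first sum
  have keypos : ∀ n : ℕ, hfun a ((n+1 : ℕ):ℤ) ≤ Real.exp (-a * (n:ℝ)^2) := by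
    intro n
    rw [hfun_nat]
    apply Real.exp_le_exp.2
    push_cast
    nlinarith [Nat.cast_nonneg (α := ℝ) n]
  have h1 : ∑' n : ℕ, hfun a (n:ℤ) ≤ 1 + (3 + 2 / Real.sqrt a) := by
    rw [Summable.tsum_eq_zero_add hs1]
    have h0 : hfun a ((0:ℕ):ℤ) = 1 := by norm_num [hfun]
    have : ∑' n : ℕ, hfun a ((n+1 : ℕ):ℤ) ≤ ∑' n : ℕ, Real.exp (-a * (n:ℝ)^2) :=
      Summable.tsum_le_tsum keypos ((summable_nat_add_iff (f := fun n : ℕ => hfun a (n:ℤ)) 1).2 hs1)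
        (gauss_summable ha)
    have h2 := gauss_nat_bound ha
    rw [h0]
    linarith
  have h2 : ∑' n : ℕ, hfun a (-((n:ℤ)+1)) ≤ 3 + 2 / Real.sqrt a := by
    have key : ∀ n : ℕ, hfun a (-((n:ℤ)+1)) ≤ Real.exp (-a * (n:ℝ)^2) := by
      intro n
      have he : (-((n:ℤ)+1)) = -(((n+1 : ℕ):ℤ)) := by push_cast; ring
      rw [he, hfun_neg_nat]
      apply Real.exp_le_exp.2
      push_cast
      nlinarith [Nat.cast_nonneg (α := ℝ) n]
    calc ∑' n : ℕ, hfun a (-((n:ℤ)+1)) ≤ ∑' n : ℕ, Real.exp (-a * (n:ℝ)^2) :=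
          Summable.tsum_le_tsum key hs2 (gauss_summable ha)
      _ ≤ 3 + 2 / Real.sqrt a := gauss_nat_bound ha
  have h3 : (2:ℝ) / Real.sqrt a = 1/Real.sqrt a + 1/Real.sqrt a := by ring
  linarith


lemma pi_prod_tsum (f : ℤ → ℝ) (hf0 : ∀ m, 0 ≤ f m) (hf : Summable f) : ∀ n : ℕ,
    Summable (fun k : Fin n → ℤ => ∏ i, f (k i)) ∧
    (∑' k : Fin n → ℤ, ∏ i, f (k i)) = (∑' m, f m) ^ n := by
  intro n
  induction n with
  | zero =>
    constructor
    · exact .of_finite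
    · rw [tsum_eq_single (fun i => 0) (fun b hb => absurd (Subsingleton.elim b _) hb)]
      simp
  | succ n ih =>
    have h1 : 0 ≤ f := Pi.le_def.mpr fun m => hf0 m
    have h2 : 0 ≤ (fun k : Fin n → ℤ => ∏ i, f (k i)) :=
      Pi.le_def.mpr fun k => Finset.prod_nonneg fun i _ => hf0 _
    have hg : Summable (fun p : ℤ × (Fin n → ℤ) => f p.1 * ∏ i, f (p.2 i)) :=
      Summable.mul_of_nonneg (f := f) (g := fun k : Fin n → ℤ => ∏ i, f (k i)) hf ih.1 h1 h2
    have he : (fun k : Fin (n+1) → ℤ => ∏ i, f (k i))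
        = (fun p : ℤ × (Fin n → ℤ) => f p.1 * ∏ i, f (p.2 i)) ∘ ((Fin.consEquiv (fun _ => ℤ)).symm) := by
      funext k
      simp [Fin.prod_univ_succ, Fin.consEquiv, Fin.tail]
    constructor
    · rw [he]
      exact (((Fin.consEquiv (fun _ => ℤ)).symm).summable_iff).2 hg
    · calc (∑' k : Fin (n+1) → ℤ, ∏ i, f (k i))
          = ∑' p : ℤ × (Fin n → ℤ), f p.1 * ∏ i, f (p.2 i) := by
            rw [he, Function.comp_def]
            exact ((Fin.consEquiv (fun _ => ℤ)).symm).tsum_eq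
              (fun p : ℤ × (Fin n → ℤ) => f p.1 * ∏ i, f (p.2 i))
        _ = ∑' m, ∑' k : Fin n → ℤ, f m * ∏ i, f (k i) := Summable.tsum_prod hg
        _ = ∑' m, f m * ∑' k : Fin n → ℤ, ∏ i, f (k i) := by
            apply tsum_congr; intro m; exact tsum_mul_left
        _ = (∑' m, f m) * (∑' m, f m) ^ n := by rw [tsum_mul_right, ih.2]
        _ = (∑' m, f m) ^ (n+1) := by ring

end PeriodizationAux

/-- Periodization of Gaussian bounds: if the fundamental solution `Γ` satisfies
`|Γ(t;x,y)| ≤ K t^{-d/2} exp(-c|x-y|²/t)` on `ℝ^d`, then the periodized kernel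
`Q(t;x,y) = Σ_{k ∈ ℤ^d} Γ(t;x,y+k)` (assumed absolutely convergent) satisfies
`|Q(t;x,y)| ≤ C K (t^{-d/2} + 1) exp(-c|x-y|²/t)` for `x, y ∈ [0,1)^d` with
`x - y ∈ [-1/2,1/2]^d`, where `C` depends only on `c` and `d`. -/
theorem statement14 (d : ℕ) (hd : 0 < d) (c K : ℝ) (hc : 0 < c) (hK : 0 < K)
    (Γ : ℝ → (Fin d → ℝ) → (Fin d → ℝ) → ℝ)
    (hΓ : ∀ t : ℝ, 0 < t → ∀ x y : Fin d → ℝ,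
      |Γ t x y| ≤ K * t ^ (-(d : ℝ) / 2) * Real.exp (-c * (∑ i, (x i - y i) ^ 2) / t)) :
    ∃ C > 0, ∀ t : ℝ, 0 < t → ∀ x y : Fin d → ℝ,
      x ∈ Set.Ico (0 : Fin d → ℝ) 1 → y ∈ Set.Ico (0 : Fin d → ℝ) 1 →
      (∀ i, |x i - y i| ≤ 1 / 2) →
      (Summable fun k : Fin d → ℤ => |Γ t x (y + fun i => (k i : ℝ))|) →
      |∑' k : Fin d → ℤ, Γ t x (y + fun i => (k i : ℝ))| ≤
        C * K * (t ^ (-(d : ℝ) / 2) + 1) * Real.exp (-c * (∑ i, (x i - y i) ^ 2) / t) := by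
  set A : ℝ := 7 + 4 / Real.sqrt c with hA
  have hApos : 0 < A := by positivity
  refine ⟨(2 * A) ^ d, by positivity, ?_⟩
  intro t ht x y hx hy hxy hsum
  set a : ℝ := c / t with ha'
  have ha : 0 < a := by positivity
  set Z : ℝ := ∑ i, (x i - y i) ^ 2 with hZ
  set E : ℝ := Real.exp (-c * Z / t) with hE
  have hEpos : 0 < E := Real.exp_pos _
  set S : ℝ := ∑' m : ℤ, hfun a m with hS
  have hS0 : 0 ≤ S := tsum_nonneg fun m => (Real.exp_pos _).le
  obtain ⟨hPsum, hPeq⟩ := pi_prod_tsum (hfun a) (fun m => (Real.exp_pos _).le)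
    (hfun_summable ha) d
  -- pointwise bound
  have hterm : ∀ k : Fin d → ℤ, |Γ t x (y + fun i => (k i : ℝ))| ≤
      K * t ^ (-(d : ℝ) / 2) * E * ∏ i, hfun a (k i) := by
    intro k
    have h1 := hΓ t ht x (y + fun i => (k i : ℝ))
    have h2 : Real.exp (-c * (∑ i, (x i - (y + fun i => (k i : ℝ)) i) ^ 2) / t) ≤
        E * ∏ i, hfun a (k i) := by
      have hprod : ∏ i, hfun a (k i) =
          Real.exp (∑ i, -a * (((k i : ℝ)) ^ 2 - |((k i : ℝ))|)) := by
        rw [Real.exp_sum]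
        rfl
      rw [hprod, hE, ← Real.exp_add]
      apply Real.exp_le_exp.2
      have hcoord : ∀ i, (x i - y i) ^ 2 + (((k i : ℝ)) ^ 2 - |((k i : ℝ))|) ≤
          (x i - (y i + (k i : ℝ))) ^ 2 := by
        intro i
        have hz := hxy i
        have h3 : (x i - y i) * (k i : ℝ) ≤ |x i - y i| * |(k i : ℝ)| := by
          calc (x i - y i) * (k i : ℝ) ≤ |(x i - y i) * (k i : ℝ)| := le_abs_self _
            _ = |x i - y i| * |(k i : ℝ)| := abs_mul _ _
        nlinarith [abs_nonneg ((k i : ℝ))]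
      have hsumineq : Z + ∑ i, (((k i : ℝ)) ^ 2 - |((k i : ℝ))|) ≤
          ∑ i, (x i - (y i + (k i : ℝ))) ^ 2 := by
        rw [hZ, ← Finset.sum_add_distrib]
        exact Finset.sum_le_sum fun i _ => hcoord i
      have hW : (∑ i, (x i - (y + fun i => (k i : ℝ)) i) ^ 2) =
          ∑ i, (x i - (y i + (k i : ℝ))) ^ 2 := by
        apply Finset.sum_congr rfl
        intro i _
        simp [Pi.add_apply]
      rw [hW]
      have hmulsum : ∑ i, -a * (((k i : ℝ)) ^ 2 - |((k i : ℝ))|) =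
          -a * ∑ i, (((k i : ℝ)) ^ 2 - |((k i : ℝ))|) := by
        rw [Finset.mul_sum]
      rw [hmulsum]
      have e1 : -c * (∑ i, (x i - (y i + (k i : ℝ))) ^ 2) / t =
          -(a * (∑ i, (x i - (y i + (k i : ℝ))) ^ 2)) := by rw [ha']; ring
      have e2 : -c * Z / t = -(a * Z) := by rw [ha']; ring
      rw [e1, e2]
      nlinarith [mul_le_mul_of_nonneg_left hsumineq ha.le]
    calc |Γ t x (y + fun i => (k i : ℝ))| ≤
        K * t ^ (-(d : ℝ) / 2) * Real.exp (-c * (∑ i, (x i - (y + fun i => (k i : ℝ)) i) ^ 2) / t) := h1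
      _ ≤ K * t ^ (-(d : ℝ) / 2) * (E * ∏ i, hfun a (k i)) := by
          apply mul_le_mul_of_nonneg_left h2
          positivity
      _ = K * t ^ (-(d : ℝ) / 2) * E * ∏ i, hfun a (k i) := by ring
  have hBsum : Summable (fun k : Fin d → ℤ =>
      K * t ^ (-(d : ℝ) / 2) * E * ∏ i, hfun a (k i)) := hPsum.mul_left _
  -- main chain
  have h1 : |∑' k : Fin d → ℤ, Γ t x (y + fun i => (k i : ℝ))| ≤
      ∑' k : Fin d → ℤ, |Γ t x (y + fun i => (k i : ℝ))| := by
    simpa [Real.norm_eq_abs] using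
      norm_tsum_le_tsum_norm (f := fun k : Fin d → ℤ => Γ t x (y + fun i => (k i : ℝ)))
        (by simpa [Real.norm_eq_abs] using hsum)
  have h2 : ∑' k : Fin d → ℤ, |Γ t x (y + fun i => (k i : ℝ))| ≤
      ∑' k : Fin d → ℤ, K * t ^ (-(d : ℝ) / 2) * E * ∏ i, hfun a (k i) :=
    Summable.tsum_le_tsum hterm hsum hBsum
  have h3 : ∑' k : Fin d → ℤ, K * t ^ (-(d : ℝ) / 2) * E * ∏ i, hfun a (k i) =
      K * t ^ (-(d : ℝ) / 2) * E * S ^ d := by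
    rw [tsum_mul_left, hPeq]
  -- bound on S
  have h4 : S ≤ A * (1 + Real.sqrt t) := by
    have hb := hfun_bound ha
    have hinv : 1 / Real.sqrt a = Real.sqrt t / Real.sqrt c := by
      rw [ha', Real.sqrt_div hc.le, one_div_div]
    rw [hinv] at hb
    have hsc : 0 < Real.sqrt c := Real.sqrt_pos.2 hc
    have hst : 0 ≤ Real.sqrt t := Real.sqrt_nonneg t
    have : 4 * (Real.sqrt t / Real.sqrt c) = 4 / Real.sqrt c * Real.sqrt t := by ring
    rw [this] at hb
    have h5 : (0:ℝ) ≤ 4 / Real.sqrt c := by positivity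
    have hb' : S ≤ 7 + 4 / Real.sqrt c * Real.sqrt t := hb
    rw [hA]
    nlinarith [mul_nonneg h5 hst]
  have h5 : S ^ d ≤ (2 * A) ^ d * (1 + t ^ ((d : ℝ) / 2)) := by
    have hsq : (Real.sqrt t) ^ d = t ^ ((d : ℝ) / 2) := by
      rw [Real.sqrt_eq_rpow, ← Real.rpow_natCast (t ^ ((1:ℝ) / 2)) d, ← Real.rpow_mul ht.le]
      congr 1
      ring
    have hs1 : S ^ d ≤ (A * (1 + Real.sqrt t)) ^ d := pow_le_pow_left₀ hS0 h4 d
    have hst : 0 ≤ Real.sqrt t := Real.sqrt_nonneg t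
    have hs2 : (1 + Real.sqrt t) ^ d ≤ 2 ^ d * (1 + (Real.sqrt t) ^ d) := by
      rcases le_total (Real.sqrt t) 1 with h | h
      · calc (1 + Real.sqrt t) ^ d ≤ 2 ^ d := pow_le_pow_left₀ (by linarith) (by linarith) d
          _ ≤ 2 ^ d * (1 + (Real.sqrt t) ^ d) := by
              apply le_mul_of_one_le_right (by positivity)
              have : (0:ℝ) ≤ (Real.sqrt t) ^ d := by positivity
              linarith
      · calc (1 + Real.sqrt t) ^ d ≤ (2 * Real.sqrt t) ^ d :=
            pow_le_pow_left₀ (by linarith) (by linarith) d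
          _ = 2 ^ d * (Real.sqrt t) ^ d := mul_pow _ _ _
          _ ≤ 2 ^ d * (1 + (Real.sqrt t) ^ d) := by
              apply mul_le_mul_of_nonneg_left _ (by positivity)
              linarith
    calc S ^ d ≤ (A * (1 + Real.sqrt t)) ^ d := hs1
      _ = A ^ d * (1 + Real.sqrt t) ^ d := mul_pow _ _ _
      _ ≤ A ^ d * (2 ^ d * (1 + (Real.sqrt t) ^ d)) := by
          apply mul_le_mul_of_nonneg_left hs2 (by positivity)
      _ = (2 * A) ^ d * (1 + (Real.sqrt t) ^ d) := by rw [mul_pow]; ring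
      _ = (2 * A) ^ d * (1 + t ^ ((d : ℝ) / 2)) := by rw [hsq]
  have hid : t ^ (-(d : ℝ) / 2) * (1 + t ^ ((d : ℝ) / 2)) = t ^ (-(d : ℝ) / 2) + 1 := by
    rw [mul_add, mul_one, ← Real.rpow_add ht]
    have he : -(d:ℝ) / 2 + (d:ℝ) / 2 = 0 := by ring
    rw [he, Real.rpow_zero]
  calc |∑' k : Fin d → ℤ, Γ t x (y + fun i => (k i : ℝ))|
      ≤ ∑' k : Fin d → ℤ, K * t ^ (-(d : ℝ) / 2) * E * ∏ i, hfun a (k i) := h1.trans h2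
    _ = K * t ^ (-(d : ℝ) / 2) * E * S ^ d := h3
    _ ≤ K * t ^ (-(d : ℝ) / 2) * E * ((2 * A) ^ d * (1 + t ^ ((d : ℝ) / 2))) := by
        apply mul_le_mul_of_nonneg_left h5
        positivity
    _ = (2 * A) ^ d * K * (t ^ (-(d : ℝ) / 2) * (1 + t ^ ((d : ℝ) / 2))) * E := by ring
    _ = (2 * A) ^ d * K * (t ^ (-(d : ℝ) / 2) + 1) * E := by rw [hid]
end

section
/- Let c > 0, d ≥ 1, K ∈ N. Define S(t, r) = Σ_{n ≥ -K} 2^{(d+2)n} e^{-c t 2^{2n}} (1 + 2^n r)^{-(d+3)} for t > 0 and r ≥ 0. Then there exists a constant C depending only on c, d, K such that S(t, r) ≤ C (√t + r)^{-(d+2)} for all t ∈ (0, 1] and r ∈ [0, 1]. -/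
open Finset Real

lemma dyadicSum (p : ℕ) (hp : 1 ≤ p) (A : ℝ) (hA : 0 ≤ A) (x : ℝ) (hx : 0 < x) :
    Summable (fun n : ℕ => min ((x * 2 ^ n) ^ p) (A / (x * 2 ^ n))) ∧
    ∑' n : ℕ, min ((x * 2 ^ n) ^ p) (A / (x * 2 ^ n)) ≤ 2 + 2 * A := by
  have hpos : ∀ n : ℕ, 0 < x * 2 ^ n := fun n => by positivity
  have hmin_nonneg : ∀ n : ℕ, 0 ≤ min ((x * 2 ^ n) ^ p) (A / (x * 2 ^ n)) := fun n =>
    le_min (by positivity) (by positivity)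
  have hgeo : Summable (fun n : ℕ => (A / x) * (1 / 2 : ℝ) ^ n) :=
    (summable_geometric_two).mul_left _
  have hle : ∀ n : ℕ, min ((x * 2 ^ n) ^ p) (A / (x * 2 ^ n)) ≤ (A / x) * (1 / 2 : ℝ) ^ n := by
    intro n
    refine (min_le_right _ _).trans (le_of_eq ?_)
    field_simp
    rw [mul_assoc, ← mul_pow]; norm_num
  have hsum : Summable (fun n : ℕ => min ((x * 2 ^ n) ^ p) (A / (x * 2 ^ n))) :=
    Summable.of_nonneg_of_le hmin_nonneg hle hgeo
  refine ⟨hsum, ?_⟩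
  have hN : ∃ n : ℕ, 1 ≤ x * 2 ^ n := by
    obtain ⟨n, hn⟩ := pow_unbounded_of_one_lt (1 / x) (by norm_num : (1:ℝ) < 2)
    exact ⟨n, by rw [div_lt_iff₀ hx] at hn; nlinarith⟩
  obtain ⟨N, hN1, hlt⟩ : ∃ N : ℕ, 1 ≤ x * 2 ^ N ∧ ∀ n < N, x * 2 ^ n < 1 :=
    ⟨Nat.find hN, Nat.find_spec hN, fun n hn => not_le.mp (Nat.find_min hN hn)⟩
  rw [← Summable.sum_add_tsum_nat_add N hsum]
  have hfin : ∑ n ∈ range N, min ((x * 2 ^ n) ^ p) (A / (x * 2 ^ n)) ≤ 2 := by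
    calc ∑ n ∈ range N, min ((x * 2 ^ n) ^ p) (A / (x * 2 ^ n))
        ≤ ∑ n ∈ range N, (1 / 2 : ℝ) ^ (N - 1 - n) := by
          refine Finset.sum_le_sum fun n hn => ?_
          rw [Finset.mem_range] at hn
          have h1 : x * 2 ^ n < 1 := hlt n hn
          have h2 : x * 2 ^ n ≤ (1 / 2 : ℝ) ^ (N - 1 - n) := by
            have hx1 : x * 2 ^ (N - 1) < 1 := hlt (N - 1) (by omega)
            have hpowadd : (2:ℝ) ^ n * 2 ^ (N - 1 - n) = 2 ^ (N - 1) := by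
              rw [← pow_add]; congr 1; omega
            have h2pos : (0:ℝ) < 2 ^ (N - 1 - n) := by positivity
            rw [one_div, inv_pow, ← one_div, le_div_iff₀ h2pos]
            calc x * 2 ^ n * 2 ^ (N - 1 - n) = x * 2 ^ (N - 1) := by
                  rw [mul_assoc, hpowadd]
              _ ≤ 1 := hx1.le
          refine (min_le_left _ _).trans ?_
          calc (x * 2 ^ n) ^ p ≤ x * 2 ^ n :=
                pow_le_of_le_one (hpos n).le h1.le (by omega)
            _ ≤ _ := h2
      _ = ∑ n ∈ range N, (1 / 2 : ℝ) ^ n := Finset.sum_range_reflect _ _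
      _ ≤ 2 := sum_geometric_two_le N
  have htail : ∑' k : ℕ, min ((x * 2 ^ (k + N)) ^ p) (A / (x * 2 ^ (k + N))) ≤ 2 * A := by
    have hgeo2 : Summable (fun k : ℕ => A * (1 / 2 : ℝ) ^ k) :=
      (summable_geometric_two).mul_left _
    have hb : ∀ k : ℕ, min ((x * 2 ^ (k + N)) ^ p) (A / (x * 2 ^ (k + N))) ≤ A * (1 / 2 : ℝ) ^ k := by
      intro k
      refine (min_le_right _ _).trans ?_
      have h2k : (2:ℝ) ^ k ≤ x * 2 ^ (k + N) := by
        calc (2:ℝ) ^ k = 1 * 2 ^ k := (one_mul _).symm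
          _ ≤ (x * 2 ^ N) * 2 ^ k := by
              apply mul_le_mul_of_nonneg_right hN1 (by positivity)
          _ = x * 2 ^ (k + N) := by rw [mul_assoc, ← pow_add]; ring_nf
      calc A / (x * 2 ^ (k + N)) ≤ A / 2 ^ k := by
            gcongr
        _ = A * (1 / 2 : ℝ) ^ k := by rw [one_div, inv_pow, div_eq_mul_inv]
    have hsumN : Summable (fun k : ℕ => min ((x * 2 ^ (k + N)) ^ p) (A / (x * 2 ^ (k + N)))) :=
      (summable_nat_add_iff (f := fun n : ℕ => min ((x * 2 ^ n) ^ p) (A / (x * 2 ^ n))) N).2 hsum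
    calc ∑' k : ℕ, min ((x * 2 ^ (k + N)) ^ p) (A / (x * 2 ^ (k + N)))
        ≤ ∑' k : ℕ, A * (1 / 2 : ℝ) ^ k := Summable.tsum_le_tsum hb hsumN hgeo2
      _ = A * 2 := by rw [tsum_mul_left, tsum_geometric_two]
      _ = 2 * A := mul_comm _ _
  linarith

lemma prodHelper (p : ℕ) (u e i A' : ℝ) (hu : 0 < u) (he0 : 0 ≤ e) (he1 : e ≤ 1)
    (hi0 : 0 ≤ i) (hi1 : i ≤ 1) (hkey : u ^ (p + 1) * e ≤ A') :
    u ^ p * e * i ≤ min (u ^ p) (A' / u) := by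
  have hup : 0 < u ^ p := pow_pos hu p
  have hei : u ^ p * e * i ≤ u ^ p * e :=
    le_of_le_of_eq (mul_le_mul_of_nonneg_left hi1 (mul_nonneg hup.le he0)) (mul_one _)
  refine le_min ?_ ?_
  · have h1 : u ^ p * e ≤ u ^ p :=
      le_of_le_of_eq (mul_le_mul_of_nonneg_left he1 hup.le) (mul_one _)
    linarith
  · have h2 : u ^ p * e ≤ A' / u := by
      rw [le_div_iff₀ hu]
      calc u ^ p * e * u = u ^ (p + 1) * e := by ring
        _ ≤ A' := hkey
    linarith

/-- Dyadic summation bound: with `S(t,r) = Σ_{n ≥ -K} 2^{(d+2)n} e^{-ct2^{2n}} (1+2^n r)^{-(d+3)}`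
(the sum over `n ≥ -K` being reindexed by `n ∈ ℕ` via `n - K`), there is `C` depending only on
`c, d, K` with `S(t,r) ≤ C(√t + r)^{-(d+2)}` for all `t ∈ (0,1]` and `r ∈ [0,1]`. -/
theorem statement16 (c : ℝ) (hc : 0 < c) (d : ℕ) (hd : 0 < d) (K : ℕ) :
    ∃ C > 0, ∀ t ∈ Set.Ioc (0 : ℝ) 1, ∀ r ∈ Set.Icc (0 : ℝ) 1,
      Summable (fun n : ℕ =>
        (2 : ℝ) ^ (((d : ℝ) + 2) * ((n : ℝ) - (K : ℝ))) *
          Real.exp (-c * t * (2 : ℝ) ^ (2 * ((n : ℝ) - (K : ℝ)))) *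
          (1 + (2 : ℝ) ^ ((n : ℝ) - (K : ℝ)) * r) ^ (-((d : ℝ) + 3))) ∧
      (∑' n : ℕ,
        (2 : ℝ) ^ (((d : ℝ) + 2) * ((n : ℝ) - (K : ℝ))) *
          Real.exp (-c * t * (2 : ℝ) ^ (2 * ((n : ℝ) - (K : ℝ)))) *
          (1 + (2 : ℝ) ^ ((n : ℝ) - (K : ℝ)) * r) ^ (-((d : ℝ) + 3)))
        ≤ C * (Real.sqrt t + r) ^ (-((d : ℝ) + 2)) := by
  have hp2 : 1 ≤ d + 2 := by omega
  set A := max 1 (((d + 3).factorial : ℝ) / c ^ (d + 3)) with hAdef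
  have hA1 : (1:ℝ) ≤ A := le_max_left _ _
  have hA0 : (0:ℝ) ≤ A := by linarith
  have expkey : ∀ u : ℝ, 0 < u → u ^ (d + 3) * Real.exp (-(c * u ^ 2)) ≤ A := by
    intro u hu
    rcases le_or_gt u 1 with h | h
    · have h1 : u ^ (d + 3) ≤ 1 := pow_le_one₀ hu.le h
      have h2 : Real.exp (-(c * u ^ 2)) ≤ 1 :=
        Real.exp_le_one_iff.2 (neg_nonpos_of_nonneg (by positivity))
      calc u ^ (d + 3) * Real.exp (-(c * u ^ 2)) ≤ 1 * 1 :=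
            mul_le_mul h1 h2 (Real.exp_pos _).le zero_le_one
        _ = 1 := one_mul 1
        _ ≤ A := le_max_left _ _
    · set m := d + 3 with hm
      have hcx : (0:ℝ) ≤ c * u ^ 2 := by positivity
      have hfac : (c * u ^ 2) ^ m / (m.factorial : ℝ) ≤ Real.exp (c * u ^ 2) :=
        Real.pow_div_factorial_le_exp (c * u ^ 2) hcx m
      have hfacpos : (0 : ℝ) < (c * u ^ 2) ^ m / (m.factorial : ℝ) := by positivity
      have h1 : u ^ m ≤ u ^ (2 * m) := pow_le_pow_right₀ h.le (by omega)
      calc u ^ m * Real.exp (-(c * u ^ 2)) = u ^ m * (Real.exp (c * u ^ 2))⁻¹ := by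
            rw [Real.exp_neg]
        _ ≤ u ^ m * ((c * u ^ 2) ^ m / (m.factorial : ℝ))⁻¹ := by gcongr
        _ = ((m.factorial : ℝ) / c ^ m) * (u ^ m / u ^ (2 * m)) := by
            rw [mul_pow, ← pow_mul]
            have h2 : (0:ℝ) < (m.factorial : ℝ) := by positivity
            field_simp
        _ ≤ ((m.factorial : ℝ) / c ^ m) * 1 := by
            apply mul_le_mul_of_nonneg_left ((div_le_one (by positivity)).2 h1) (by positivity)
        _ = (m.factorial : ℝ) / c ^ m := mul_one _
        _ ≤ A := le_max_right _ _
  refine ⟨2 ^ (d + 2) * (2 + 2 * A + 4), by positivity, ?_⟩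
  intro t ht r hr
  obtain ⟨ht0, ht1⟩ := ht
  obtain ⟨hr0, hr1⟩ := hr
  have hst : 0 < Real.sqrt t := Real.sqrt_pos.2 ht0
  have hg : ∀ n : ℕ,
      (2 : ℝ) ^ (((d : ℝ) + 2) * ((n : ℝ) - (K : ℝ))) *
        Real.exp (-c * t * (2 : ℝ) ^ (2 * ((n : ℝ) - (K : ℝ)))) *
        (1 + (2 : ℝ) ^ ((n : ℝ) - (K : ℝ)) * r) ^ (-((d : ℝ) + 3))
      = (2 ^ n / 2 ^ K) ^ (d + 2) * Real.exp (-c * t * (2 ^ n / 2 ^ K) ^ 2) *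
        ((1 + 2 ^ n / 2 ^ K * r) ^ (d + 3))⁻¹ := by
    intro n
    have hw : (2:ℝ) ^ ((n:ℝ) - (K:ℝ)) = 2 ^ n / 2 ^ K := by
      rw [Real.rpow_sub (by norm_num : (0:ℝ) < 2), Real.rpow_natCast, Real.rpow_natCast]
    have hwpos : (0:ℝ) < 2 ^ n / 2 ^ K := by positivity
    have h1 : (2:ℝ) ^ (((d:ℝ) + 2) * ((n:ℝ) - (K:ℝ))) = (2 ^ n / 2 ^ K) ^ (d + 2) := by
      rw [mul_comm ((d:ℝ) + 2) ((n:ℝ) - (K:ℝ)), Real.rpow_mul (by norm_num : (0:ℝ) ≤ 2), hw,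
        show ((d:ℝ) + 2) = ((d + 2 : ℕ) : ℝ) by push_cast; ring, Real.rpow_natCast]
    have h2 : (2:ℝ) ^ (2 * ((n:ℝ) - (K:ℝ))) = (2 ^ n / 2 ^ K) ^ 2 := by
      rw [mul_comm (2:ℝ) ((n:ℝ) - (K:ℝ)), Real.rpow_mul (by norm_num : (0:ℝ) ≤ 2), hw]
      norm_cast
    have h3 : (1 + (2:ℝ) ^ ((n:ℝ) - (K:ℝ)) * r) ^ (-((d:ℝ) + 3))
        = ((1 + 2 ^ n / 2 ^ K * r) ^ (d + 3))⁻¹ := by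
      rw [hw, show -((d:ℝ) + 3) = -(((d + 3 : ℕ)) : ℝ) by push_cast; ring,
        Real.rpow_neg (by positivity), Real.rpow_natCast]
    rw [h1, h2, h3]
  simp only [hg]
  set F : ℕ → ℝ := fun n => (2 ^ n / 2 ^ K) ^ (d + 2) *
      Real.exp (-c * t * (2 ^ n / 2 ^ K) ^ 2) *
      ((1 + 2 ^ n / 2 ^ K * r) ^ (d + 3))⁻¹ with hF
  have hFnonneg : ∀ n, 0 ≤ F n := by
    intro n
    rw [hF]
    positivity
  have key_t : ∀ n : ℕ, F n * Real.sqrt t ^ (d + 2)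
      ≤ min ((Real.sqrt t / 2 ^ K * 2 ^ n) ^ (d + 2)) (A / (Real.sqrt t / 2 ^ K * 2 ^ n)) := by
    intro n
    have hwpos : (0:ℝ) < 2 ^ n / 2 ^ K := by positivity
    set u := Real.sqrt t / 2 ^ K * 2 ^ n with hu
    have hupos : 0 < u := by positivity
    have huw : u = Real.sqrt t * (2 ^ n / 2 ^ K) := by rw [hu]; ring
    have ht2 : t * (2 ^ n / 2 ^ K) ^ 2 = u ^ 2 := by
      rw [huw, mul_pow, Real.sq_sqrt ht0.le]
    have hFn : F n = (2 ^ n / 2 ^ K) ^ (d + 2) * Real.exp (-c * t * (2 ^ n / 2 ^ K) ^ 2) *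
        ((1 + 2 ^ n / 2 ^ K * r) ^ (d + 3))⁻¹ := rfl
    have heq : F n * Real.sqrt t ^ (d + 2)
        = u ^ (d + 2) * Real.exp (-(c * u ^ 2)) * ((1 + 2 ^ n / 2 ^ K * r) ^ (d + 3))⁻¹ := by
      rw [hFn, show -c * t * (2 ^ n / 2 ^ K) ^ 2 = -(c * (t * (2 ^ n / 2 ^ K) ^ 2)) by ring, ht2,
        huw, mul_pow]
      ring
    rw [heq]
    refine prodHelper (d + 2) u _ _ A hupos (Real.exp_pos _).le
      (Real.exp_le_one_iff.2 (neg_nonpos_of_nonneg (by positivity)))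
      (by positivity) ?_ ?_
    · have h1 : (1:ℝ) ≤ (1 + 2 ^ n / 2 ^ K * r) ^ (d + 3) :=
        one_le_pow₀ (by nlinarith [mul_nonneg hwpos.le hr0])
      exact inv_le_one_of_one_le₀ h1
    · have h := expkey u hupos
      have hexp : d + 2 + 1 = d + 3 := by omega
      rw [hexp]
      exact h
  obtain ⟨sumA, bndA⟩ := dyadicSum (d + 2) hp2 A hA0 (Real.sqrt t / 2 ^ K) (by positivity)
  have hspos : (0:ℝ) < Real.sqrt t ^ (d + 2) := by positivity
  have hsummable : Summable F := by
    refine Summable.of_nonneg_of_le hFnonneg (fun n => ?_) (sumA.div_const (Real.sqrt t ^ (d + 2)))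
    exact (le_div_iff₀ hspos).2 (key_t n)
  refine ⟨hsummable, ?_⟩
  have hT0 : 0 ≤ ∑' n, F n := tsum_nonneg hFnonneg
  have hTA : (∑' n, F n) * Real.sqrt t ^ (d + 2) ≤ 2 + 2 * A := by
    rw [← tsum_mul_right]
    exact le_trans (Summable.tsum_le_tsum key_t (hsummable.mul_right _) sumA) bndA
  have hTB : (∑' n, F n) * r ^ (d + 2) ≤ 4 := by
    rcases eq_or_lt_of_le hr0 with h0 | hrpos
    · rw [← h0, zero_pow (by omega : d + 2 ≠ 0), mul_zero]
      norm_num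
    · have key_r : ∀ n : ℕ, F n * r ^ (d + 2)
          ≤ min ((r / 2 ^ K * 2 ^ n) ^ (d + 2)) (1 / (r / 2 ^ K * 2 ^ n)) := by
        intro n
        have hwpos : (0:ℝ) < 2 ^ n / 2 ^ K := by positivity
        set v := r / 2 ^ K * 2 ^ n with hv
        have hvpos : 0 < v := by positivity
        have hvw : v = 2 ^ n / 2 ^ K * r := by rw [hv]; ring
        have hFn : F n = (2 ^ n / 2 ^ K) ^ (d + 2) * Real.exp (-c * t * (2 ^ n / 2 ^ K) ^ 2) *
            ((1 + 2 ^ n / 2 ^ K * r) ^ (d + 3))⁻¹ := rfl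
        have heq : F n * r ^ (d + 2)
            = v ^ (d + 2) * ((1 + v) ^ (d + 3))⁻¹ * Real.exp (-c * t * (2 ^ n / 2 ^ K) ^ 2) := by
          rw [hFn, hvw, mul_pow]
          ring
        rw [heq]
        refine prodHelper (d + 2) v _ _ 1 hvpos (by positivity) ?_ (Real.exp_pos _).le
          (Real.exp_le_one_iff.2 (by nlinarith [mul_nonneg (mul_nonneg hc.le ht0.le) (sq_nonneg ((2:ℝ) ^ n / 2 ^ K))])) ?_
        · have h1 : (1:ℝ) ≤ (1 + v) ^ (d + 3) := one_le_pow₀ (by linarith)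
          exact inv_le_one_of_one_le₀ h1
        · have hvv : v ^ (d + 3) ≤ (1 + v) ^ (d + 3) :=
            pow_le_pow_left₀ hvpos.le (by linarith) _
          have hexp : d + 2 + 1 = d + 3 := by omega
          rw [hexp, ← div_eq_mul_inv, div_le_one (by positivity)]
          exact hvv
      obtain ⟨sumB, bndB⟩ := dyadicSum (d + 2) hp2 1 zero_le_one (r / 2 ^ K) (by positivity)
      rw [← tsum_mul_right]
      calc ∑' n, F n * r ^ (d + 2)
          ≤ ∑' n : ℕ, min ((r / 2 ^ K * 2 ^ n) ^ (d + 2)) (1 / (r / 2 ^ K * 2 ^ n)) :=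
            Summable.tsum_le_tsum key_r (hsummable.mul_right _) sumB
        _ ≤ 2 + 2 * 1 := bndB
        _ = 4 := by norm_num
  have hs : 0 < Real.sqrt t + r := by positivity
  have hrw : (Real.sqrt t + r) ^ (-((d:ℝ) + 2)) = ((Real.sqrt t + r) ^ (d + 2))⁻¹ := by
    rw [show -((d:ℝ) + 2) = -(((d + 2 : ℕ)) : ℝ) by push_cast; ring,
      Real.rpow_neg hs.le, Real.rpow_natCast]
  rw [hrw, ← div_eq_mul_inv, le_div_iff₀ (by positivity)]
  have hsplit : (Real.sqrt t + r) ^ (d + 2)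
      ≤ 2 ^ (d + 2) * (Real.sqrt t ^ (d + 2) + r ^ (d + 2)) := by
    have h1 : Real.sqrt t + r ≤ 2 * max (Real.sqrt t) r := by
      have ha := le_max_left (Real.sqrt t) r
      have hb := le_max_right (Real.sqrt t) r
      linarith
    calc (Real.sqrt t + r) ^ (d + 2) ≤ (2 * max (Real.sqrt t) r) ^ (d + 2) :=
          pow_le_pow_left₀ (by positivity) h1 _
      _ = 2 ^ (d + 2) * (max (Real.sqrt t) r) ^ (d + 2) := mul_pow _ _ _
      _ ≤ 2 ^ (d + 2) * (Real.sqrt t ^ (d + 2) + r ^ (d + 2)) := by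
          refine mul_le_mul_of_nonneg_left ?_ (by positivity)
          rcases max_cases (Real.sqrt t) r with ⟨h, _⟩ | ⟨h, _⟩ <;> rw [h]
          · nlinarith [pow_nonneg hr0 (d + 2)]
          · nlinarith [pow_nonneg hst.le (d + 2)]
  have h2m : (0:ℝ) ≤ 2 ^ (d + 2) := by positivity
  nlinarith [mul_le_mul_of_nonneg_left hsplit hT0, mul_le_mul_of_nonneg_left hTA h2m,
    mul_le_mul_of_nonneg_left hTB h2m]
end
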